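/- For every r ∈ ℂ⁴ with f_r = u²·u′ for independent linear forms u, u′, the stabilizer {h ∈ GL₂(ℂ) : h·r = r} is conjugate in GL₂(ℂ) to the subgroup {[[a,0],[0,1]] : a ∈ ℂ, a ≠ 0}. In particular, the stabilizer of c₂ = (0,1,0,0) (so f_{c₂} = −3y²x) is exactly the set {[[a,0],[0,1]] : a ≠ 0}. -/
import Mathlib


noncomputable section

open Matrix

/-- The binary cubic form `f_r(x,y) = r₀y³ − 3r₁y²x − 3r₂yx² − r₃x³` attached to `r ∈ ℂ⁴`. -/
def fcub (r : Fin 4 → ℂ) (x y : ℂ) : ℂ :=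
  r 0 * y ^ 3 - 3 * r 1 * y ^ 2 * x - 3 * r 2 * y * x ^ 2 - r 3 * x ^ 3

/-- The 4×4 matrix `M(h)` for `h = [[a,b],[c,d]]`. -/
def Mmat (a b c d : ℂ) : Matrix (Fin 4) (Fin 4) ℂ :=
  !![d ^ 3, -3 * c * d ^ 2, -3 * c ^ 2 * d, -c ^ 3;
     -b * d ^ 2, d * (a * d + 2 * b * c), c * (2 * a * d + b * c), a * c ^ 2;
     -b ^ 2 * d, b * (2 * a * d + b * c), a * (a * d + 2 * b * c), a ^ 2 * c;
     -b ^ 3, 3 * a * b ^ 2, 3 * a ^ 2 * b, a ^ 3]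

/-- The action `h·r := (ad−bc)⁻¹ · M(h) · r` of `GL₂(ℂ)` on `ℂ⁴`. -/
def act (a b c d : ℂ) (r : Fin 4 → ℂ) : Fin 4 → ℂ :=
  (a * d - b * c)⁻¹ • (Mmat a b c d).mulVec r

/-- Matrix form of `Mmat`. -/
def MmatM (h : Matrix (Fin 2) (Fin 2) ℂ) : Matrix (Fin 4) (Fin 4) ℂ :=
  Mmat (h 0 0) (h 0 1) (h 1 0) (h 1 1)

/-- Matrix form of the action. -/
def actM (h : Matrix (Fin 2) (Fin 2) ℂ) (r : Fin 4 → ℂ) : Fin 4 → ℂ :=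
  act (h 0 0) (h 0 1) (h 1 0) (h 1 1) r

/-- Matrix of the dual action: the coefficients of
`(ad−bc)² · f_{h·*s}(x,y) = f_s(dx−by, ay−cx)`. -/
def Mdual (a b c d : ℂ) : Matrix (Fin 4) (Fin 4) ℂ :=
  !![a ^ 3, 3 * a ^ 2 * b, -3 * a * b ^ 2, b ^ 3;
     a ^ 2 * c, a ^ 2 * d + 2 * a * b * c, -(2 * a * b * d + b ^ 2 * c), b ^ 2 * d;
     -a * c ^ 2, -(2 * a * c * d + b * c ^ 2), a * d ^ 2 + 2 * b * c * d, -b * d ^ 2;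
     c ^ 3, 3 * c ^ 2 * d, -3 * c * d ^ 2, d ^ 3]

/-- The dual action `h·*s`: the unique vector satisfying
`fcub (dualAct a b c d s) x y = ((a*d−b*c)²)⁻¹ * fcub s (d*x−b*y) (a*y−c*x)`. -/
def dualAct (a b c d : ℂ) (s : Fin 4 → ℂ) : Fin 4 → ℂ :=
  ((a * d - b * c) ^ 2)⁻¹ • (Mdual a b c d).mulVec s

/-- Matrix form of the dual action. -/
def dualActM (h : Matrix (Fin 2) (Fin 2) ℂ) (s : Fin 4 → ℂ) : Fin 4 → ℂ :=
  dualAct (h 0 0) (h 0 1) (h 1 0) (h 1 1) s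

/-- The linear form `u₁y − u₂x` attached to `u = (u₁,u₂) ∈ ℂ²`. -/
def linForm (u : ℂ × ℂ) (x y : ℂ) : ℂ := u.1 * y - u.2 * x

/-- Two linear forms are independent if `u₁u₂′ − u₂u₁′ ≠ 0`. -/
def indepLF (u v : ℂ × ℂ) : Prop := u.1 * v.2 - u.2 * v.1 ≠ 0

/-- `d₀(r) = −9(r₀r₂ + r₁²)`. -/
def dd0 (r : Fin 4 → ℂ) : ℂ := -9 * (r 0 * r 2 + r 1 ^ 2)

/-- `d₁(r) = −9(r₀r₃ + r₁r₂)`. -/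
def dd1 (r : Fin 4 → ℂ) : ℂ := -9 * (r 0 * r 3 + r 1 * r 2)

/-- `d₂(r) = 9(r₁r₃ − r₂²)`. -/
def dd2 (r : Fin 4 → ℂ) : ℂ := 9 * (r 1 * r 3 - r 2 ^ 2)

/-- The quadratic form `Δ_r(x,y) = d₀(r)y² + d₁(r)xy + d₂(r)x²`. -/
def Δform (r : Fin 4 → ℂ) (x y : ℂ) : ℂ := dd0 r * y ^ 2 + dd1 r * x * y + dd2 r * x ^ 2

/-- The discriminant `D_r = d₁(r)² − 4d₀(r)d₂(r)`. -/
def Ddisc (r : Fin 4 → ℂ) : ℂ := dd1 r ^ 2 - 4 * dd0 r * dd2 r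

/-- The pairing `⟨r,s⟩ = r₀s₀ + 3r₁s₁ + 3r₂s₂ + r₃s₃`. -/
def pairK (r s : Fin 4 → ℂ) : ℂ := r 0 * s 0 + 3 * r 1 * s 1 + 3 * r 2 * s 2 + r 3 * s 3

/-- The Hessian matrix of `f_r` evaluated at `(x,y)`. -/
def HessM (r : Fin 4 → ℂ) (x y : ℂ) : Matrix (Fin 2) (Fin 2) ℂ :=
  !![6 * r 0 * y - 6 * r 1 * x, -6 * r 1 * y - 6 * r 2 * x;
     -6 * r 1 * y - 6 * r 2 * x, -6 * r 2 * y - 6 * r 3 * x]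

/-- The moment map `[r,s]`. -/
def momentMap (r s : Fin 4 → ℂ) : Matrix (Fin 2) (Fin 2) ℂ :=
  !![r 0 * s 0 + 2 * r 1 * s 1 + r 2 * s 2, -(r 1 * s 0) + 2 * r 2 * s 1 + r 3 * s 2;
     -(r 0 * s 1) + 2 * r 1 * s 2 + r 2 * s 3, r 1 * s 1 + 2 * r 2 * s 2 + r 3 * s 3]


lemma Mmul (g h : Matrix (Fin 2) (Fin 2) ℂ) : MmatM (g * h) = MmatM g * MmatM h := by
  ext i j
  fin_cases i <;> fin_cases j <;>
    simp [MmatM, Mmat, Matrix.mul_apply, Fin.sum_univ_succ] <;> ring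

lemma detGH (g h : Matrix (Fin 2) (Fin 2) ℂ) :
    (g * h) 0 0 * (g * h) 1 1 - (g * h) 0 1 * (g * h) 1 0 =
      (g 0 0 * g 1 1 - g 0 1 * g 1 0) * (h 0 0 * h 1 1 - h 0 1 * h 1 0) := by
  simp [Matrix.mul_apply, Fin.sum_univ_succ]; ring

lemma actM_eq (h : Matrix (Fin 2) (Fin 2) ℂ) (r : Fin 4 → ℂ) :
    actM h r = (h 0 0 * h 1 1 - h 0 1 * h 1 0)⁻¹ • (MmatM h).mulVec r := rfl

lemma act_mul (g h : Matrix (Fin 2) (Fin 2) ℂ) (r : Fin 4 → ℂ) :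
    actM (g * h) r = actM g (actM h r) := by
  rw [actM_eq, actM_eq, actM_eq, Mmul, detGH, mul_inv]
  funext i
  fin_cases i <;>
    simp [Matrix.mulVec, dotProduct, Matrix.mul_apply, Fin.sum_univ_succ] <;> ring

lemma act_one (r : Fin 4 → ℂ) : actM 1 r = r := by
  funext i
  fin_cases i <;>
    simp [actM, act, Mmat, Matrix.mulVec, dotProduct, Fin.sum_univ_four,
      Matrix.one_apply]

lemma stab_c2 :
    {h : Matrix (Fin 2) (Fin 2) ℂ | h.det ≠ 0 ∧ actM h ![0, 1, 0, 0] = ![0, 1, 0, 0]} =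
      {m : Matrix (Fin 2) (Fin 2) ℂ | ∃ a : ℂ, a ≠ 0 ∧ m = !![a, 0; 0, 1]} := by
  ext h
  simp only [Set.mem_setOf_eq]
  constructor
  · rintro ⟨hdet, hact⟩
    have hD : h 0 0 * h 1 1 - h 0 1 * h 1 0 ≠ 0 := by
      rw [Matrix.det_fin_two] at hdet; exact hdet
    have E0 := congrFun hact 0
    have E1 := congrFun hact 1
    have E2 := congrFun hact 2
    have E3 := congrFun hact 3
    simp [actM, act, Mmat, Matrix.mulVec, dotProduct, Fin.sum_univ_four] at E0 E1 E2 E3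
    have hdne : h 1 1 ≠ 0 := by
      intro h0
      rw [h0] at E1
      simp at E1
    have hc0 : h 1 0 = 0 := by
      rcases E0 with h1 | h1 | h1
      · exact absurd h1 hD
      · exact h1
      · exact absurd h1 hdne
    have hane : h 0 0 ≠ 0 := by
      intro h0; apply hD; rw [h0, hc0]; ring
    have hb0 : h 0 1 = 0 := by
      rcases E3 with h1 | h1 | h1
      · exact absurd h1 hD
      · exact absurd h1 hane
      · exact h1
    have hD' : h 0 0 * h 1 1 ≠ 0 := mul_ne_zero hane hdne
    have hd1 : h 1 1 = 1 := by
      rw [hb0, hc0] at E1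
      rw [show h 0 0 * h 1 1 - 0 * 0 = h 0 0 * h 1 1 by ring,
        show h 0 0 * h 1 1 + 2 * 0 * 0 = h 0 0 * h 1 1 by ring,
        inv_mul_eq_iff_eq_mul₀ hD'] at E1
      have h4 : (h 1 1 - 1) * (h 0 0 * h 1 1) = 0 := by linear_combination E1
      rcases mul_eq_zero.mp h4 with h1 | h1
      · exact sub_eq_zero.mp h1
      · exact absurd h1 hD'
    refine ⟨h 0 0, hane, ?_⟩
    ext i j
    fin_cases i <;> fin_cases j <;> simp [hb0, hc0, hd1]
  · rintro ⟨a, hane, rfl⟩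
    refine ⟨by simp [Matrix.det_fin_two, hane], ?_⟩
    funext i
    fin_cases i <;>
      simp [actM, act, Mmat, Matrix.mulVec, dotProduct, Fin.sum_univ_four] <;>
      field_simp

/-- if `f_r = u²·u′` for independent linear forms `u, u′`, the stabilizer of
`r` is conjugate in `GL₂(ℂ)` to `{[[a,0],[0,1]] : a ≠ 0}`; in particular the stabilizer
of `c₂ = (0,1,0,0)` is exactly this subgroup. -/
theorem stmt5 :
    (∀ r : Fin 4 → ℂ, ∀ u u' : ℂ × ℂ, indepLF u u' →
      (∀ x y : ℂ, fcub r x y = (linForm u x y) ^ 2 * linForm u' x y) →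
      ∃ g : Matrix (Fin 2) (Fin 2) ℂ, g.det ≠ 0 ∧
        {h : Matrix (Fin 2) (Fin 2) ℂ | h.det ≠ 0 ∧ actM h r = r} =
          (fun m => g * m * g⁻¹) ''
            {m : Matrix (Fin 2) (Fin 2) ℂ | ∃ a : ℂ, a ≠ 0 ∧ m = !![a, 0; 0, 1]}) ∧
    {h : Matrix (Fin 2) (Fin 2) ℂ | h.det ≠ 0 ∧ actM h ![0, 1, 0, 0] = ![0, 1, 0, 0]} =
      {m : Matrix (Fin 2) (Fin 2) ℂ | ∃ a : ℂ, a ≠ 0 ∧ m = !![a, 0; 0, 1]} := by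
  constructor
  · intro r u u' hind H
    set Δ : ℂ := u.1 * u'.2 - u.2 * u'.1 with hΔdef
    have hΔ : Δ ≠ 0 := hind
    set g : Matrix (Fin 2) (Fin 2) ℂ :=
      !![u'.2, -(Δ / 3) * u.2; -u'.1, (Δ / 3) * u.1] with hgdef
    have hgd : g.det = Δ ^ 2 / 3 := by
      rw [hgdef, Matrix.det_fin_two_of, hΔdef]; ring
    have hΔ3 : (Δ ^ 2 / 3 : ℂ) ≠ 0 := div_ne_zero (pow_ne_zero 2 hΔ) (by norm_num)
    have hgdet : g.det ≠ 0 := by rw [hgd]; exact hΔ3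
    -- coefficient identities
    have A := H 0 1
    have B := H 1 0
    have C := H 1 1
    have Dq := H (-1) 1
    simp only [fcub, linForm] at A B C Dq
    have hr0 : r 0 = u.1 ^ 2 * u'.1 := by linear_combination A
    have hr3 : r 3 = u.2 ^ 2 * u'.2 := by linear_combination -B
    have hr1 : 3 * r 1 = u.1 ^ 2 * u'.2 + 2 * u.1 * u.2 * u'.1 := by
      linear_combination (1/2) * Dq - (1/2) * C - hr3
    have hr2 : 3 * r 2 = -(2 * u.1 * u.2 * u'.2 + u.2 ^ 2 * u'.1) := by
      linear_combination hr0 - (1/2) * Dq - (1/2) * C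
    have hD2 : g 0 0 * g 1 1 - g 0 1 * g 1 0 = Δ ^ 2 / 3 := by
      rw [← Matrix.det_fin_two]; exact hgd
    have comp : ∀ i, (Mmat (g 0 0) (g 0 1) (g 1 0) (g 1 1)).mulVec ![0, 1, 0, 0] i
        = Δ ^ 2 / 3 * r i := by
      intro i
      fin_cases i
      · simp [Mmat, Matrix.mulVec, dotProduct, Fin.sum_univ_four, hgdef]
        linear_combination (-(u.1 * u'.2 - u.2 * u'.1) ^ 2 / 3) * hr0
      · simp [Mmat, Matrix.mulVec, dotProduct, Fin.sum_univ_four, hgdef]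
        linear_combination (-(u.1 * u'.2 - u.2 * u'.1) ^ 2 / 9) * hr1
      · simp [Mmat, Matrix.mulVec, dotProduct, Fin.sum_univ_four, hgdef]
        linear_combination (-(u.1 * u'.2 - u.2 * u'.1) ^ 2 / 9) * hr2
      · simp [Mmat, Matrix.mulVec, dotProduct, Fin.sum_univ_four, hgdef]
        linear_combination (-(u.1 * u'.2 - u.2 * u'.1) ^ 2 / 3) * hr3
    have hg : actM g ![0, 1, 0, 0] = r := by
      funext i
      show (g 0 0 * g 1 1 - g 0 1 * g 1 0)⁻¹ *
          ((Mmat (g 0 0) (g 0 1) (g 1 0) (g 1 1)).mulVec ![0, 1, 0, 0] i) = r i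
      rw [hD2, comp i, inv_mul_cancel_left₀ hΔ3]
    -- conjugation of stabilizers
    have hgu : IsUnit g.det := isUnit_iff_ne_zero.mpr hgdet
    have hgi : g * g⁻¹ = 1 := Matrix.mul_nonsing_inv g hgu
    have hig : g⁻¹ * g = 1 := Matrix.nonsing_inv_mul g hgu
    have hginvdet : g⁻¹.det ≠ 0 := by
      have h1 : g⁻¹.det * g.det = 1 := by rw [← Matrix.det_mul, hig, Matrix.det_one]
      intro h0; rw [h0, zero_mul] at h1; exact zero_ne_one h1
    refine ⟨g, hgdet, ?_⟩
    rw [← stab_c2]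
    ext h
    simp only [Set.mem_setOf_eq, Set.mem_image]
    constructor
    · rintro ⟨hdet, hact⟩
      refine ⟨g⁻¹ * h * g, ⟨?_, ?_⟩, ?_⟩
      · simp only [Matrix.det_mul]
        exact mul_ne_zero (mul_ne_zero hginvdet hdet) hgdet
      · rw [act_mul, act_mul, hg, hact, ← hg, ← act_mul, hig, act_one]
      · calc g * (g⁻¹ * h * g) * g⁻¹ = (g * g⁻¹) * (h * (g * g⁻¹)) := by
              noncomm_ring
          _ = h := by rw [hgi, one_mul, mul_one]
    · rintro ⟨m, ⟨hmdet, hmact⟩, rfl⟩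
      refine ⟨?_, ?_⟩
      · simp only [Matrix.det_mul]
        exact mul_ne_zero (mul_ne_zero hgdet hmdet) hginvdet
      · rw [act_mul, act_mul, ← hg, ← act_mul g⁻¹ g, hig, act_one, hmact]
  · exact stab_c2


end
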